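/- Consider a zero-sum semidefinite network game with payoff operators Φ_{ij} and Φ_i(X) = Σ_{j ∈ N(i)} Φ_{ij}(X_j). A profile X of density matrices is a Nash equilibrium if and only if there exists w ∈ ℝ^N such that Φ_i(X) ⪯ w_i I_{n_i} for all i ∈ [N] and Σ_{i=1}^N w_i = 0. In particular, the set of Nash equilibria equals the coordinate projection onto the X-coordinates of the set of optimal solutions of the semidefinite program minimizing Σ_i w_i subject to Φ_i(X) ⪯ w_i I_{n_i}, tr(X_i) = 1, X_i ⪰ 0 for all i. -/

import Mathlib

open Matrix Kronecker BigOperators ComplexOrder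

noncomputable section

/-- Frobenius inner product `⟨A, B⟩ = tr(Aᴴ B)`. -/
def frob {α : Type*} [Fintype α] (A B : Matrix α α ℂ) : ℂ := (Aᴴ * B).trace

/-- A density matrix: positive semidefinite with trace one. -/
def IsDensity {α : Type*} [Fintype α] (X : Matrix α α ℂ) : Prop :=
  X.PosSemidef ∧ X.trace = 1

/-- The payoff operator `Φ_R` associated with a payoff matrix `R`,
defined entrywise by `Φ_R(T)_{a,b} = Σ_{c,d} R_{(a,c),(b,d)} T_{d,c}`. -/
def payoffOp {k m : ℕ} (R : Matrix (Fin k × Fin m) (Fin k × Fin m) ℂ)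
    (T : Matrix (Fin m) (Fin m) ℂ) : Matrix (Fin k) (Fin k) ℂ :=
  Matrix.of fun a b => ∑ c, ∑ d, R (a, c) (b, d) * T d c

/-- The payoff of player `i`: `p_i(X) = Σ_{j ∈ N(i)} ⟨R_{ij}, X_i ⊗ X_j⟩` (a real number). -/
def payoff {N : ℕ} (G : SimpleGraph (Fin N)) [DecidableRel G.Adj] (n : Fin N → ℕ)
    (R : ∀ i j : Fin N, Matrix (Fin (n i) × Fin (n j)) (Fin (n i) × Fin (n j)) ℂ)
    (X : ∀ i, Matrix (Fin (n i)) (Fin (n i)) ℂ) (i : Fin N) : ℝ :=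
  (∑ j ∈ G.neighborFinset i, frob (R i j) ((X i) ⊗ₖ (X j))).re

/-- `Φ_i(X) = Σ_{j ∈ N(i)} Φ_{ij}(X_j)`. -/
def Phi {N : ℕ} (G : SimpleGraph (Fin N)) [DecidableRel G.Adj] (n : Fin N → ℕ)
    (R : ∀ i j : Fin N, Matrix (Fin (n i) × Fin (n j)) (Fin (n i) × Fin (n j)) ℂ)
    (X : ∀ i, Matrix (Fin (n i)) (Fin (n i)) ℂ) (i : Fin N) :
    Matrix (Fin (n i)) (Fin (n i)) ℂ :=
  ∑ j ∈ G.neighborFinset i, payoffOp (R i j) (X j)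

/-- Nash equilibrium (best-response) condition for a strategy profile. -/
def IsNash {N : ℕ} (G : SimpleGraph (Fin N)) [DecidableRel G.Adj] (n : Fin N → ℕ)
    (R : ∀ i j : Fin N, Matrix (Fin (n i) × Fin (n j)) (Fin (n i) × Fin (n j)) ℂ)
    (X : ∀ i, Matrix (Fin (n i)) (Fin (n i)) ℂ) : Prop :=
  ∀ i, ∀ S : Matrix (Fin (n i)) (Fin (n i)) ℂ, IsDensity S →
    payoff G n R (Function.update X i S) i ≤ payoff G n R X i

/-- The largest eigenvalue of a Hermitian matrix (junk value `0` otherwise). -/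
def lamMax {k : ℕ} (A : Matrix (Fin k) (Fin k) ℂ) : ℝ :=
  if h : A.IsHermitian then ⨆ i, h.eigenvalues i else 0


section SkewLemma

lemma skew_quad_zero {m : ℕ} (A : Matrix (Fin m) (Fin m) ℝ)
    (hA : ∀ j k, A j k = - A k j) (c : Fin m → ℝ) :
    ∑ j, ∑ k, c j * A j k * c k = 0 := by
  have h : (∑ j, ∑ k, c j * A j k * c k) = - ∑ j, ∑ k, c j * A j k * c k := by
    calc (∑ j, ∑ k, c j * A j k * c k) = ∑ j, ∑ k, c j * (- A k j) * c k := by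
          refine Finset.sum_congr rfl fun j _ => Finset.sum_congr rfl fun k _ => by rw [← hA]
      _ = - ∑ k, ∑ j, c k * A k j * c j := by
          rw [Finset.sum_comm]; rw [← Finset.sum_neg_distrib]
          refine Finset.sum_congr rfl fun k _ => ?_
          rw [← Finset.sum_neg_distrib]
          refine Finset.sum_congr rfl fun j _ => by ring
      _ = - ∑ j, ∑ k, c j * A j k * c k := rfl
  linarith

lemma skew_lemma {m : ℕ} (hm : 0 < m) (A : Matrix (Fin m) (Fin m) ℝ)
    (hA : ∀ j k, A j k = - A k j) :
    ∃ lam : Fin m → ℝ, lam ∈ stdSimplex ℝ (Fin m) ∧ ∀ j, ∑ k, A j k * lam k ≤ 0 := by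
  by_contra hcon
  push_neg at hcon
  set K : Set (Fin m → ℝ) := (fun l => A.mulVec l) '' stdSimplex ℝ (Fin m) with hK
  set O : Set (Fin m → ℝ) := {u | ∀ j, u j ≤ 0} with hO
  have hdisj : Disjoint O K := by
    rw [Set.disjoint_left]
    rintro u hu ⟨l, hl, rfl⟩
    obtain ⟨j, hj⟩ := hcon l hl
    exact absurd (hu j) (by simpa [Matrix.mulVec, dotProduct] using hj.not_ge)
  have hOc : Convex ℝ O := by
    intro u hu v hv a b ha hb hab j
    have := add_nonneg (mul_nonneg ha (neg_nonneg.2 (hu j))) (mul_nonneg hb (neg_nonneg.2 (hv j)))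
    simpa [Pi.add_apply, mul_comm] using by nlinarith [hu j, hv j]
  have hOcl : IsClosed O := by
    have : O = ⋂ j, {u : Fin m → ℝ | u j ≤ 0} := by ext u; simp [hO]
    rw [this]
    exact isClosed_iInter fun j => isClosed_le (continuous_apply j) continuous_const
  have hKc : Convex ℝ K := (convex_stdSimplex ℝ _).linear_image A.mulVecLin
  have hKcp : IsCompact K :=
    (isCompact_stdSimplex _ _).image A.mulVecLin.continuous_of_finiteDimensional
  obtain ⟨f, u, v, hfu, huv, hfv⟩ := geometric_hahn_banach_closed_compact hOc hOcl hKc hKcp hdisj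
  have hu0 : 0 < u := by simpa using hfu 0 (fun j => le_refl 0)
  set e : Fin m → (Fin m → ℝ) := fun j => (fun k => if j = k then 1 else 0) with he
  set c : Fin m → ℝ := fun j => f (e j) with hc
  have hcnn : ∀ j, 0 ≤ c j := by
    intro j
    by_contra hneg
    push_neg at hneg
    have hmem : ((2 * u / c j) • e j : Fin m → ℝ) ∈ O := by
      intro k
      rcases eq_or_ne j k with rfl | hkj
      · have h2u : (0:ℝ) < 2 * u := by linarith
        simp only [Pi.smul_apply, he, smul_eq_mul, if_true, mul_one, if_pos trivial]
        exact (div_neg_of_pos_of_neg h2u hneg).le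
      · simp [he, if_neg hkj]
    have := hfu _ hmem
    rw [_root_.map_smul] at this
    have : (2 * u / c j) * c j < u := this
    rw [div_mul_cancel₀] at this
    · linarith
    · exact ne_of_lt hneg
  have hfx : ∀ x : Fin m → ℝ, f x = ∑ j, x j * c j := by
    intro x
    conv_lhs => rw [pi_eq_sum_univ x]
    rw [map_sum]
    exact Finset.sum_congr rfl fun j _ => by rw [_root_.map_smul]; simp [hc, he]
  have hcs : 0 < ∑ j, c j := by
    rcases (Finset.sum_nonneg fun j _ => hcnn j).lt_or_eq with h | h
    · exact h
    · exfalso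
      have hc0 : ∀ j, c j = 0 := by
        intro j
        have := (Finset.sum_eq_zero_iff_of_nonneg (fun j _ => hcnn j)).1 h.symm
        exact this j (Finset.mem_univ j)
      have hl0 : (fun _ => (m : ℝ)⁻¹ : Fin m → ℝ) ∈ stdSimplex ℝ (Fin m) := by
        constructor
        · intro j; positivity
        · simp [Finset.card_univ]
          field_simp
      have := hfv _ ⟨_, hl0, rfl⟩
      rw [hfx] at this
      simp [hc0] at this
      linarith
  set lam : Fin m → ℝ := fun j => c j / (∑ k, c k) with hlam
  have hlmem : lam ∈ stdSimplex ℝ (Fin m) := by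
    constructor
    · intro j; exact div_nonneg (hcnn j) hcs.le
    · rw [← Finset.sum_div]; field_simp
  have hv' := hfv _ ⟨lam, hlmem, rfl⟩
  rw [hfx] at hv'
  have hzero : ∑ j, (A.mulVec lam) j * c j = 0 := by
    have : ∑ j, (A.mulVec lam) j * c j
        = (∑ k, c k)⁻¹ * ∑ j, ∑ k, c j * A j k * c k := by
      rw [Finset.mul_sum]
      refine Finset.sum_congr rfl fun j _ => ?_
      simp only [Matrix.mulVec, dotProduct, hlam]
      rw [Finset.sum_mul, Finset.mul_sum]
      refine Finset.sum_congr rfl fun k _ => ?_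
      field_simp
    rw [this, skew_quad_zero A hA c, mul_zero]
  rw [hzero] at hv'
  linarith

end SkewLemma

noncomputable section




lemma frob_expand {α : Type*} [Fintype α] (A B : Matrix α α ℂ) :
    frob A B = ∑ p, ∑ q, (starRingEnd ℂ) (A q p) * B q p := by
  simp [frob, Matrix.trace, Matrix.mul_apply, Matrix.conjTranspose_apply, Matrix.diag]

lemma frob_kron {k m : ℕ} {R : Matrix (Fin k × Fin m) (Fin k × Fin m) ℂ}
    (hR : R.IsHermitian) {S : Matrix (Fin k) (Fin k) ℂ} (hS : S.IsHermitian)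
    (T : Matrix (Fin m) (Fin m) ℂ) :
    frob R (S ⊗ₖ T) = frob S (payoffOp R T) := by
  have e1 : frob R (S ⊗ₖ T) = ∑ a, ∑ b, ∑ c, ∑ d, R (a,c) (b,d) * S b a * T d c := by
    rw [frob_expand]
    have : ∀ p q : Fin k × Fin m,
        (starRingEnd ℂ) (R q p) * (S ⊗ₖ T) q p = R p q * S q.1 p.1 * T q.2 p.2 := by
      intro p q
      rw [← Complex.star_def, hR.apply, Matrix.kroneckerMap_apply]
      ring
    simp only [this]
    rw [Fintype.sum_prod_type]
    refine Finset.sum_congr rfl fun a _ => ?_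
    rw [Finset.sum_comm, Fintype.sum_prod_type]
    exact Finset.sum_congr rfl fun b _ => Finset.sum_comm
  have e2 : frob S (payoffOp R T) = ∑ a, ∑ b, ∑ c, ∑ d, R (a,c) (b,d) * S b a * T d c := by
    rw [frob_expand]
    have : ∀ a b : Fin k,
        (starRingEnd ℂ) (S b a) * (payoffOp R T) b a
          = ∑ c, ∑ d, R (b,c) (a,d) * S a b * T d c := by
      intro a b
      rw [← Complex.star_def, hS.apply, payoffOp, Matrix.of_apply, Finset.mul_sum]
      refine Finset.sum_congr rfl fun c _ => ?_
      rw [Finset.mul_sum]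
      refine Finset.sum_congr rfl fun d _ => by ring
    simp only [this]
    rw [Finset.sum_comm]
  rw [e1, e2]

end

noncomputable section
open ComplexOrder

lemma payoffOp_isHermitian {k m : ℕ} {R : Matrix (Fin k × Fin m) (Fin k × Fin m) ℂ}
    (hR : R.IsHermitian) {T : Matrix (Fin m) (Fin m) ℂ} (hT : T.IsHermitian) :
    (payoffOp R T).IsHermitian := by
  rw [Matrix.IsHermitian]
  ext a b
  rw [Matrix.conjTranspose_apply, payoffOp, Matrix.of_apply, Matrix.of_apply,
    Complex.star_def, map_sum, Finset.sum_comm]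
  refine Finset.sum_congr rfl fun c _ => ?_
  rw [map_sum]
  refine Finset.sum_congr rfl fun d _ => ?_
  rw [_root_.map_mul, ← Complex.star_def, hR.apply, hT.apply]

lemma payoffOp_add {k m : ℕ} (R : Matrix (Fin k × Fin m) (Fin k × Fin m) ℂ)
    (T T' : Matrix (Fin m) (Fin m) ℂ) :
    payoffOp R (T + T') = payoffOp R T + payoffOp R T' := by
  ext a b
  simp [payoffOp, mul_add, Finset.sum_add_distrib]

lemma payoffOp_smul {k m : ℕ} (R : Matrix (Fin k × Fin m) (Fin k × Fin m) ℂ)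
    (c : ℂ) (T : Matrix (Fin m) (Fin m) ℂ) :
    payoffOp R (c • T) = c • payoffOp R T := by
  ext a b
  simp [payoffOp, Finset.mul_sum]
  refine Finset.sum_congr rfl fun x _ => ?_
  refine Finset.sum_congr rfl fun y _ => ?_
  ring

lemma frob_add_right {α : Type*} [Fintype α] (A B C : Matrix α α ℂ) :
    frob A (B + C) = frob A B + frob A C := by
  simp [frob, Matrix.mul_add]

lemma frob_add_left {α : Type*} [Fintype α] (A B C : Matrix α α ℂ) :
    frob (A + B) C = frob A C + frob B C := by
  simp [frob, Matrix.add_mul]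

lemma frob_smul_right {α : Type*} [Fintype α] (c : ℂ) (A B : Matrix α α ℂ) :
    frob A (c • B) = c * frob A B := by
  simp [frob, Matrix.mul_smul, Matrix.trace_smul, smul_eq_mul]

lemma frob_smul_left {α : Type*} [Fintype α] (c : ℂ) (A B : Matrix α α ℂ) :
    frob (c • A) B = (starRingEnd ℂ) c * frob A B := by
  simp [frob, Matrix.conjTranspose_smul, Matrix.smul_mul, Matrix.trace_smul, smul_eq_mul,
    Complex.star_def]

lemma frob_sum_right {α : Type*} [Fintype α] {ι : Type*} (s : Finset ι)
    (A : Matrix α α ℂ) (B : ι → Matrix α α ℂ) :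
    frob A (∑ j ∈ s, B j) = ∑ j ∈ s, frob A (B j) := by
  simp [frob, Matrix.mul_sum, Matrix.trace_sum]

/-- trace of a psd matrix is nonneg (complex order) -/
lemma psd_trace_nonneg {α : Type*} [Fintype α] [DecidableEq α] {A : Matrix α α ℂ}
    (hA : A.PosSemidef) : 0 ≤ A.trace := by
  rw [Matrix.trace]
  refine Finset.sum_nonneg fun i _ => ?_
  have := hA.dotProduct_mulVec_nonneg (Pi.single i 1)
  simpa [Matrix.mulVec, dotProduct, Pi.single_apply] using this

lemma frob_psd_nonneg {α : Type*} [Fintype α] [DecidableEq α] {A B : Matrix α α ℂ}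
    (hA : A.PosSemidef) (hB : B.PosSemidef) : 0 ≤ frob A B := by
  obtain ⟨C, hC⟩ : ∃ C : Matrix α α ℂ, A = Cᴴ * C := by
    open scoped MatrixOrder in
    obtain ⟨B, hB⟩ := CStarAlgebra.nonneg_iff_eq_star_mul_self.mp hA.nonneg
    exact ⟨B, by simpa [star_eq_conjTranspose] using hB⟩
  obtain ⟨D, hD⟩ : ∃ D : Matrix α α ℂ, B = Dᴴ * D := by
    open scoped MatrixOrder in
    obtain ⟨B', hB'⟩ := CStarAlgebra.nonneg_iff_eq_star_mul_self.mp hB.nonneg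
    exact ⟨B', by simpa [star_eq_conjTranspose] using hB'⟩
  have : frob A B = ((D * Cᴴ)ᴴ * (D * Cᴴ)).trace := by
    rw [frob, hA.1, hC, hD]
    rw [Matrix.conjTranspose_mul, Matrix.conjTranspose_conjTranspose]
    rw [show Cᴴ * C * (Dᴴ * D) = Cᴴ * (C * Dᴴ * D) by noncomm_ring]
    rw [Matrix.trace_mul_comm]
    noncomm_ring
  rw [this]
  exact psd_trace_nonneg (Matrix.posSemidef_conjTranspose_mul_self _)

lemma frob_real {α : Type*} [Fintype α] {A B : Matrix α α ℂ}
    (hA : A.IsHermitian) (hB : B.IsHermitian) :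
    (frob A B).im = 0 := by
  have h : star (frob A B) = frob A B := by
    rw [frob, ← Matrix.trace_conjTranspose, Matrix.conjTranspose_mul,
      Matrix.conjTranspose_conjTranspose, hA.eq, hB.eq, Matrix.trace_mul_comm]
  have := congrArg Complex.im h
  simp only [Complex.star_def, Complex.conj_im] at this
  linarith

end

noncomputable section
open ComplexOrder

lemma frob_sub_right {α : Type*} [Fintype α] [DecidableEq α] (A B C : Matrix α α ℂ) :
    frob A (B - C) = frob A B - frob A C := by
  simp [frob, Matrix.mul_sub]

lemma frob_one_right {α : Type*} [Fintype α] [DecidableEq α] {S : Matrix α α ℂ} (hS : S.IsHermitian) :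
    frob S 1 = S.trace := by
  rw [frob, Matrix.mul_one, hS.eq]

/-- If `A ⪯ w•1` then `Re⟨S, A⟩ ≤ w` for any density matrix `S`. -/
lemma density_frob_le {k : ℕ} {S A : Matrix (Fin k) (Fin k) ℂ} (hS : IsDensity S)
    {w : ℝ} (hw : ((w : ℂ) • (1 : Matrix (Fin k) (Fin k) ℂ) - A).PosSemidef) :
    (frob S A).re ≤ w := by
  have h0 := frob_psd_nonneg hS.1 hw
  rw [frob_sub_right, frob_smul_right, frob_one_right hS.1.1, hS.2, mul_one] at h0
  have := (Complex.le_def.1 h0).1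
  simp only [Complex.zero_re, Complex.sub_re, Complex.ofReal_re] at this
  linarith

lemma herm_smul_one_sub {k : ℕ} {A : Matrix (Fin k) (Fin k) ℂ} (hA : A.IsHermitian) (w : ℝ) :
    ((w : ℂ) • (1 : Matrix (Fin k) (Fin k) ℂ) - A).IsHermitian := by
  refine Matrix.IsHermitian.sub ?_ hA
  rw [Matrix.IsHermitian, Matrix.conjTranspose_smul, Matrix.conjTranspose_one]
  simp

/-- quadratic form of a Hermitian matrix is real -/
lemma herm_quad_real {k : ℕ} {A : Matrix (Fin k) (Fin k) ℂ} (hA : A.IsHermitian)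
    (x : Fin k → ℂ) : (star x ⬝ᵥ A.mulVec x).im = 0 := by
  have hq : star x ⬝ᵥ A.mulVec x = ∑ i, ∑ j, (starRingEnd ℂ) (x i) * A i j * x j := by
    simp [dotProduct, Matrix.mulVec, Finset.mul_sum, mul_assoc, Complex.star_def]
  have h : (starRingEnd ℂ) (star x ⬝ᵥ A.mulVec x) = star x ⬝ᵥ A.mulVec x := by
    rw [hq]
    simp only [map_sum]
    nth_rewrite 2 [Finset.sum_comm]
    refine Finset.sum_congr rfl fun i _ => ?_
    refine Finset.sum_congr rfl fun j _ => ?_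
    simp only [_root_.map_mul, Complex.conj_conj]
    have hji : (starRingEnd ℂ) (A i j) = A j i := hA.apply j i
    rw [hji]
    ring
  have := congrArg Complex.im h
  simp only [Complex.conj_im] at this
  linarith

/-- If `Re⟨S, A⟩ ≤ w` for all densities `S`, and `A` is Hermitian, then `A ⪯ w•1`. -/
lemma posSemidef_of_density_frob_le {k : ℕ} {A : Matrix (Fin k) (Fin k) ℂ}
    (hA : A.IsHermitian) {w : ℝ} (h : ∀ S, IsDensity S → (frob S A).re ≤ w) :
    ((w : ℂ) • (1 : Matrix (Fin k) (Fin k) ℂ) - A).PosSemidef := by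
  refine Matrix.PosSemidef.of_dotProduct_mulVec_nonneg (herm_smul_one_sub hA w) fun x => ?_
  rcases eq_or_ne x 0 with rfl | hx
  · simp
  -- the quadratic form decomposes
  have hquad : star x ⬝ᵥ ((w : ℂ) • (1 : Matrix (Fin k) (Fin k) ℂ) - A).mulVec x
      = (w : ℂ) * (star x ⬝ᵥ x) - star x ⬝ᵥ A.mulVec x := by
    rw [Matrix.sub_mulVec, dotProduct_sub, Matrix.smul_mulVec,
      Matrix.one_mulVec, dotProduct_smul, smul_eq_mul]
  set t : ℝ := ∑ a, Complex.normSq (x a) with ht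
  have htpos : 0 < t := by
    have hxa : ∃ a, x a ≠ 0 := by
      by_contra hc
      push_neg at hc
      exact hx (funext hc)
    obtain ⟨a, ha⟩ := hxa
    refine Finset.sum_pos' (fun i _ => Complex.normSq_nonneg _) ⟨a, Finset.mem_univ a, ?_⟩
    exact Complex.normSq_pos.2 ha
  have hxx : star x ⬝ᵥ x = (t : ℝ) := by
    simp only [dotProduct, Pi.star_apply, ht, Complex.ofReal_sum]
    exact Finset.sum_congr rfl fun a _ => by
      rw [Complex.star_def, mul_comm, Complex.mul_conj]
  -- build the density matrix
  set S : Matrix (Fin k) (Fin k) ℂ :=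
    ((t : ℂ))⁻¹ • Matrix.of (fun a b => x a * (starRingEnd ℂ) (x b)) with hSdef
  have htne : ((t : ℂ)) ≠ 0 := by
    simp only [ne_eq, Complex.ofReal_eq_zero]
    exact htpos.ne'
  have hSpsd : S.PosSemidef := by
    have houter : (Matrix.of (fun a b => x a * (starRingEnd ℂ) (x b))).PosSemidef := by
      have : Matrix.of (fun a b => x a * (starRingEnd ℂ) (x b))
          = (Matrix.of (fun (_ : Fin 1) b => (starRingEnd ℂ) (x b)))ᴴ
            * Matrix.of (fun (_ : Fin 1) b => (starRingEnd ℂ) (x b)) := by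
        ext a b
        simp [Matrix.mul_apply, Matrix.conjTranspose_apply, Complex.star_def]
      rw [this]
      exact Matrix.posSemidef_conjTranspose_mul_self _
    refine Matrix.PosSemidef.of_dotProduct_mulVec_nonneg ?_ fun y => ?_
    · rw [Matrix.IsHermitian, Matrix.conjTranspose_smul, houter.1.eq]
      congr 1
      simp [Complex.star_def]
    · rw [Matrix.smul_mulVec, dotProduct_smul, smul_eq_mul]
      refine mul_nonneg ?_ (houter.dotProduct_mulVec_nonneg y)
      rw [← Complex.ofReal_inv]
      exact Complex.zero_le_real.2 (by positivity)
  have hStr : S.trace = 1 := by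
    rw [hSdef, Matrix.trace_smul, smul_eq_mul]
    have : (Matrix.of (fun a b => x a * (starRingEnd ℂ) (x b))).trace = (t : ℂ) := by
      simp only [Matrix.trace, Matrix.diag, Matrix.of_apply, ht, Complex.ofReal_sum]
      exact Finset.sum_congr rfl fun a _ => Complex.mul_conj _
    rw [this, inv_mul_cancel₀ htne]
  have hfS : frob S A = ((t : ℂ))⁻¹ * (star x ⬝ᵥ A.mulVec x) := by
    rw [frob_expand]
    have hdot : star x ⬝ᵥ A.mulVec x = ∑ p, ∑ q, (starRingEnd ℂ) (x q) * x p * A q p := by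
      rw [Finset.sum_comm]
      simp only [dotProduct, Matrix.mulVec, Pi.star_apply, Finset.mul_sum,
        Complex.star_def]
      refine Finset.sum_congr rfl fun q _ => Finset.sum_congr rfl fun p _ => by ring
    rw [hdot, Finset.mul_sum]
    refine Finset.sum_congr rfl fun p _ => ?_
    rw [Finset.mul_sum]
    refine Finset.sum_congr rfl fun q _ => ?_
    simp only [hSdef, Matrix.smul_apply, Matrix.of_apply, smul_eq_mul, _root_.map_mul,
      map_inv₀, Complex.conj_conj, Complex.conj_ofReal]
    ring
  have hle := h S ⟨hSpsd, hStr⟩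
  rw [hfS] at hle
  have him := herm_quad_real hA x
  have hrew : (((t : ℂ))⁻¹ * (star x ⬝ᵥ A.mulVec x)).re
      = t⁻¹ * (star x ⬝ᵥ A.mulVec x).re := by
    rw [← Complex.ofReal_inv, Complex.re_ofReal_mul]
  rw [hrew] at hle
  have hle' : (star x ⬝ᵥ A.mulVec x).re ≤ w * t := by
    have h2 := mul_le_mul_of_nonneg_left hle htpos.le
    rw [← mul_assoc, mul_inv_cancel₀ htpos.ne', one_mul] at h2
    linarith
  rw [hquad, Complex.le_def]
  constructor
  · rw [hxx]
    simp only [Complex.zero_re, Complex.sub_re, Complex.mul_re, Complex.ofReal_re,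
      Complex.ofReal_im, him]
    nlinarith [hle']
  · rw [hxx]
    simp only [Complex.zero_im, Complex.sub_im, Complex.mul_im, Complex.ofReal_im,
      Complex.ofReal_re, him]
    ring

end

noncomputable section
open ComplexOrder




variable {N : ℕ} (G : SimpleGraph (Fin N)) [DecidableRel G.Adj] (n : Fin N → ℕ)
  (R : ∀ i j : Fin N, Matrix (Fin (n i) × Fin (n j)) (Fin (n i) × Fin (n j)) ℂ)

lemma phi_isHermitian (hR : ∀ i j, G.Adj i j → (R i j).IsHermitian)
    {X : ∀ i, Matrix (Fin (n i)) (Fin (n i)) ℂ} (hX : ∀ i, (X i).IsHermitian) (i : Fin N) :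
    (Phi G n R X i).IsHermitian := by
  rw [Phi, Matrix.IsHermitian, Matrix.conjTranspose_sum]
  refine Finset.sum_congr rfl fun j hj => ?_
  exact (payoffOp_isHermitian (hR i j ((G.mem_neighborFinset i j).1 hj)) (hX j)).eq

lemma payoff_eq (hR : ∀ i j, G.Adj i j → (R i j).IsHermitian)
    {X : ∀ i, Matrix (Fin (n i)) (Fin (n i)) ℂ} (hX : ∀ i, (X i).IsHermitian) (i : Fin N) :
    payoff G n R X i = (frob (X i) (Phi G n R X i)).re := by
  rw [payoff, Phi, frob_sum_right]
  congr 1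
  refine Finset.sum_congr rfl fun j hj => ?_
  exact frob_kron (hR i j ((G.mem_neighborFinset i j).1 hj)) (hX i) (X j)

lemma payoff_update_eq (hR : ∀ i j, G.Adj i j → (R i j).IsHermitian)
    {X : ∀ i, Matrix (Fin (n i)) (Fin (n i)) ℂ} (i : Fin N)
    {S : Matrix (Fin (n i)) (Fin (n i)) ℂ} (hS : S.IsHermitian) :
    payoff G n R (Function.update X i S) i = (frob S (Phi G n R X i)).re := by
  rw [payoff, Phi, frob_sum_right]
  congr 1
  refine Finset.sum_congr rfl fun j hj => ?_
  have hadj := (G.mem_neighborFinset i j).1 hj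
  have hji : j ≠ i := fun h => G.irrefl (h ▸ hadj)
  rw [Function.update_self, Function.update_of_ne hji]
  exact frob_kron (hR i j hadj) hS (X j)

/-- the aggregate bilinear form -/
def Fb (X Y : ∀ i, Matrix (Fin (n i)) (Fin (n i)) ℂ) : ℝ :=
  ∑ i, (frob (Y i) (Phi G n R X i)).re

lemma phi_add (X X' : ∀ i, Matrix (Fin (n i)) (Fin (n i)) ℂ) (i : Fin N) :
    Phi G n R (fun j => X j + X' j) i = Phi G n R X i + Phi G n R X' i := by
  rw [Phi, Phi, Phi, ← Finset.sum_add_distrib]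
  exact Finset.sum_congr rfl fun j _ => payoffOp_add _ _ _

lemma phi_smul (c : ℂ) (X : ∀ i, Matrix (Fin (n i)) (Fin (n i)) ℂ) (i : Fin N) :
    Phi G n R (fun j => c • X j) i = c • Phi G n R X i := by
  rw [Phi, Phi, Finset.smul_sum]
  exact Finset.sum_congr rfl fun j _ => payoffOp_smul _ _ _

/-- real smul on complex matrices agrees with coercion smul -/
lemma real_smul_matrix {k : ℕ} (r : ℝ) (M : Matrix (Fin k) (Fin k) ℂ) :
    r • M = (r : ℂ) • M := by
  ext a b
  simp [Matrix.smul_apply, Complex.real_smul]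

lemma psd_smul_real {k : ℕ} {M : Matrix (Fin k) (Fin k) ℂ} (hM : M.PosSemidef)
    {r : ℝ} (hr : 0 ≤ r) : ((r : ℂ) • M).PosSemidef := by
  refine Matrix.PosSemidef.of_dotProduct_mulVec_nonneg ?_ fun y => ?_
  · rw [Matrix.IsHermitian, Matrix.conjTranspose_smul, hM.1.eq, Complex.star_def,
      Complex.conj_ofReal]
  · rw [Matrix.smul_mulVec, dotProduct_smul, smul_eq_mul]
    exact mul_nonneg (Complex.zero_le_real.2 hr) (hM.dotProduct_mulVec_nonneg y)

lemma Fb_add_left (X X' Y : ∀ i, Matrix (Fin (n i)) (Fin (n i)) ℂ) :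
    Fb G n R (fun j => X j + X' j) Y = Fb G n R X Y + Fb G n R X' Y := by
  rw [Fb, Fb, Fb, ← Finset.sum_add_distrib]
  refine Finset.sum_congr rfl fun i _ => ?_
  rw [phi_add, frob_add_right, Complex.add_re]

lemma Fb_smul_left (r : ℝ) (X Y : ∀ i, Matrix (Fin (n i)) (Fin (n i)) ℂ) :
    Fb G n R (fun j => (r : ℂ) • X j) Y = r * Fb G n R X Y := by
  rw [Fb, Fb, Finset.mul_sum]
  refine Finset.sum_congr rfl fun i _ => ?_
  rw [phi_smul, frob_smul_right, Complex.re_ofReal_mul]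

lemma Fb_add_right (X Y Y' : ∀ i, Matrix (Fin (n i)) (Fin (n i)) ℂ) :
    Fb G n R X (fun j => Y j + Y' j) = Fb G n R X Y + Fb G n R X Y' := by
  rw [Fb, Fb, Fb, ← Finset.sum_add_distrib]
  refine Finset.sum_congr rfl fun i _ => ?_
  rw [frob_add_left, Complex.add_re]

lemma Fb_smul_right (r : ℝ) (X Y : ∀ i, Matrix (Fin (n i)) (Fin (n i)) ℂ) :
    Fb G n R X (fun j => (r : ℂ) • Y j) = r * Fb G n R X Y := by
  rw [Fb, Fb, Finset.mul_sum]
  refine Finset.sum_congr rfl fun i _ => ?_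
  rw [frob_smul_left, Complex.conj_ofReal, Complex.re_ofReal_mul]

end

noncomputable section
open ComplexOrder

variable {N : ℕ} (G : SimpleGraph (Fin N)) [DecidableRel G.Adj] (n : Fin N → ℕ)
  (R : ∀ i j : Fin N, Matrix (Fin (n i) × Fin (n j)) (Fin (n i) × Fin (n j)) ℂ)

lemma Fb_self (hR : ∀ i j, G.Adj i j → (R i j).IsHermitian)
    (hzs : ∀ X : ∀ i, Matrix (Fin (n i)) (Fin (n i)) ℂ,
      (∀ i, IsDensity (X i)) → ∑ i, payoff G n R X i = 0)
    {X : ∀ i, Matrix (Fin (n i)) (Fin (n i)) ℂ} (hX : ∀ i, IsDensity (X i)) :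
    Fb G n R X X = 0 := by
  rw [Fb, ← hzs X hX]
  exact Finset.sum_congr rfl fun i _ => (payoff_eq G n R hR (fun j => (hX j).1.1) i).symm

lemma density_half_add {k : ℕ} {M M' : Matrix (Fin k) (Fin k) ℂ}
    (hM : IsDensity M) (hM' : IsDensity M') :
    IsDensity (((1/2 : ℝ) : ℂ) • M + ((1/2 : ℝ) : ℂ) • M') := by
  constructor
  · exact (psd_smul_real hM.1 (by norm_num)).add (psd_smul_real hM'.1 (by norm_num))
  · rw [Matrix.trace_add, Matrix.trace_smul, Matrix.trace_smul, hM.2, hM'.2]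
    norm_num

lemma Fb_skew (hR : ∀ i j, G.Adj i j → (R i j).IsHermitian)
    (hzs : ∀ X : ∀ i, Matrix (Fin (n i)) (Fin (n i)) ℂ,
      (∀ i, IsDensity (X i)) → ∑ i, payoff G n R X i = 0)
    {X Y : ∀ i, Matrix (Fin (n i)) (Fin (n i)) ℂ}
    (hX : ∀ i, IsDensity (X i)) (hY : ∀ i, IsDensity (Y i)) :
    Fb G n R X Y = - Fb G n R Y X := by
  set Z : ∀ i, Matrix (Fin (n i)) (Fin (n i)) ℂ :=
    fun i => ((1/2 : ℝ) : ℂ) • X i + ((1/2 : ℝ) : ℂ) • Y i with hZdef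
  have hZ : ∀ i, IsDensity (Z i) := fun i => density_half_add (hX i) (hY i)
  have h0 : Fb G n R Z Z = 0 := Fb_self G n R hR hzs hZ
  have h1 : Fb G n R Z Z = 1/2 * Fb G n R Z X + 1/2 * Fb G n R Z Y := by
    have h := Fb_add_right G n R Z (fun j => ((1/2 : ℝ) : ℂ) • X j)
      (fun j => ((1/2 : ℝ) : ℂ) • Y j)
    rw [Fb_smul_right, Fb_smul_right] at h
    exact h
  have h2 : Fb G n R Z X = 1/2 * Fb G n R X X + 1/2 * Fb G n R Y X := by
    have h := Fb_add_left G n R (fun j => ((1/2 : ℝ) : ℂ) • X j)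
      (fun j => ((1/2 : ℝ) : ℂ) • Y j) X
    rw [Fb_smul_left, Fb_smul_left] at h
    exact h
  have h3 : Fb G n R Z Y = 1/2 * Fb G n R X Y + 1/2 * Fb G n R Y Y := by
    have h := Fb_add_left G n R (fun j => ((1/2 : ℝ) : ℂ) • X j)
      (fun j => ((1/2 : ℝ) : ℂ) • Y j) Y
    rw [Fb_smul_left, Fb_smul_left] at h
    exact h
  have hXX : Fb G n R X X = 0 := Fb_self G n R hR hzs hX
  have hYY : Fb G n R Y Y = 0 := Fb_self G n R hR hzs hY
  rw [h1, h2, h3, hXX, hYY] at h0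
  linarith

lemma nash_iff_Fb (hR : ∀ i j, G.Adj i j → (R i j).IsHermitian)
    (hzs : ∀ X : ∀ i, Matrix (Fin (n i)) (Fin (n i)) ℂ,
      (∀ i, IsDensity (X i)) → ∑ i, payoff G n R X i = 0)
    {X : ∀ i, Matrix (Fin (n i)) (Fin (n i)) ℂ} (hX : ∀ i, IsDensity (X i)) :
    IsNash G n R X ↔ ∀ Y : ∀ i, Matrix (Fin (n i)) (Fin (n i)) ℂ,
      (∀ i, IsDensity (Y i)) → Fb G n R X Y ≤ 0 := by
  constructor
  · intro hnash Y hY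
    have hle : Fb G n R X Y ≤ ∑ i, payoff G n R X i := by
      rw [Fb]
      refine Finset.sum_le_sum fun i _ => ?_
      rw [← payoff_update_eq G n R hR i (hY i).1.1]
      exact hnash i (Y i) (hY i)
    rw [hzs X hX] at hle
    exact hle
  · intro h i S hS
    set Y : ∀ j, Matrix (Fin (n j)) (Fin (n j)) ℂ := Function.update X i S with hYdef
    have hY : ∀ j, IsDensity (Y j) := by
      intro j
      rcases eq_or_ne j i with rfl | hji
      · rw [hYdef, Function.update_self]; exact hS
      · rw [hYdef, Function.update_of_ne hji]; exact hX j
    have hle := h Y hY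
    have hsplit : Fb G n R X Y
        = (frob S (Phi G n R X i)).re + ∑ j ∈ Finset.univ.erase i,
            (frob (X j) (Phi G n R X j)).re := by
      rw [Fb, ← Finset.add_sum_erase _ _ (Finset.mem_univ i), hYdef, Function.update_self]
      congr 1
      refine Finset.sum_congr rfl fun j hj => ?_
      rw [Function.update_of_ne (Finset.ne_of_mem_erase hj)]
    have hsplit2 : (0:ℝ) = payoff G n R X i + ∑ j ∈ Finset.univ.erase i,
        (frob (X j) (Phi G n R X j)).re := by
      rw [← hzs X hX, ← Finset.add_sum_erase _ _ (Finset.mem_univ i)]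
      congr 1
      refine Finset.sum_congr rfl fun j hj => ?_
      exact payoff_eq G n R hR (fun l => (hX l).1.1) j
    rw [payoff_update_eq G n R hR i hS.1.1]
    rw [hsplit] at hle
    linarith

end

noncomputable section
open ComplexOrder

lemma psd_diag_nonneg {k : ℕ} {M : Matrix (Fin k) (Fin k) ℂ} (hM : M.PosSemidef)
    (a : Fin k) : 0 ≤ M a a := by
  have h := hM.dotProduct_mulVec_nonneg (Pi.single a 1)
  have hs : star (Pi.single a 1 : Fin k → ℂ) = Pi.single a 1 := by
    funext p
    simp only [Pi.star_apply, Pi.single_apply]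
    split_ifs <;> simp
  rw [hs, Matrix.mulVec_single_one, single_dotProduct, one_mul] at h
  exact h

lemma single_add_quad {k : ℕ} (M : Matrix (Fin k) (Fin k) ℂ) (a b : Fin k) (c : ℂ) :
    star (Pi.single a 1 + Pi.single b c) ⬝ᵥ M.mulVec (Pi.single a 1 + Pi.single b c)
      = M a a + M a b * c + (starRingEnd ℂ) c * M b a + (starRingEnd ℂ) c * M b b * c := by
  have hstar : star (Pi.single a 1 + Pi.single b c : Fin k → ℂ)
      = Pi.single a 1 + Pi.single b ((starRingEnd ℂ) c) := by
    funext p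
    simp only [Pi.star_apply, Pi.add_apply, star_add, Pi.single_apply]
    split_ifs <;> simp [Complex.star_def]
  rw [hstar, Matrix.mulVec_add, dotProduct_add, add_dotProduct,
    add_dotProduct, Matrix.mulVec_single, Matrix.mulVec_single]
  simp only [single_dotProduct, Pi.single_apply, Pi.smul_apply, MulOpposite.smul_eq_mul_unop,
    MulOpposite.unop_op, Matrix.col_apply]
  ring

/-- Entry bound for density matrices. -/
lemma density_entry_bound {k : ℕ} {M : Matrix (Fin k) (Fin k) ℂ} (hM : IsDensity M)
    (a b : Fin k) : ‖M a b‖ ≤ 1 := by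
  have hdiag : ∀ p, 0 ≤ M p p := psd_diag_nonneg hM.1
  have hdiag_re : ∀ p, 0 ≤ (M p p).re := fun p => (Complex.le_def.1 (hdiag p)).1
  have htr : ∑ p, (M p p).re = 1 := by
    have := congrArg Complex.re hM.2
    rw [Matrix.trace] at this
    simpa [Complex.re_sum] using this
  have hdle : ∀ p, (M p p).re ≤ 1 := by
    intro p
    rw [← htr]
    exact Finset.single_le_sum (fun q _ => hdiag_re q) (Finset.mem_univ p)
  rcases eq_or_ne a b with rfl | hab
  · have him : (M a a).im = 0 := ((Complex.le_def.1 (hdiag a)).2).symm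
    have hre : M a a = (((M a a).re : ℝ) : ℂ) := Complex.ext rfl (by simp [him])
    rw [hre, Complex.norm_real, Real.norm_of_nonneg (hdiag_re a)]
    exact hdle a
  · rcases eq_or_ne (M a b) 0 with h0 | h0
    · simp [h0]
    have habs : (0:ℝ) < ‖M a b‖ := by
      simpa using h0
    set r : ℝ := ‖M a b‖ with hr
    have hrne : (r : ℂ) ≠ 0 := by
      simp only [ne_eq, Complex.ofReal_eq_zero]
      exact habs.ne'
    set c : ℂ := - (starRingEnd ℂ) (M a b) / (r : ℂ) with hc
    have hMba : M b a = (starRingEnd ℂ) (M a b) := by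
      have h := hM.1.1.apply a b
      rw [← h, Complex.star_def, Complex.conj_conj]
    have hzz : M a b * (starRingEnd ℂ) (M a b) = ((r : ℂ)) ^ 2 := by
      rw [Complex.mul_conj, ← Complex.sq_norm, hr]
      push_cast
      ring
    have hq := hM.1.dotProduct_mulVec_nonneg (Pi.single a 1 + Pi.single b c)
    rw [single_add_quad] at hq
    have hcalc : M a a + M a b * c + (starRingEnd ℂ) c * M b a + (starRingEnd ℂ) c * M b b * c
        = M a a + M b b - 2 * (r : ℂ) := by
      have hcc : (starRingEnd ℂ) c = - (M a b) / (r : ℂ) := by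
        rw [hc, map_div₀, map_neg, Complex.conj_conj, Complex.conj_ofReal]
      have h1 : M a b * c = - (r : ℂ) := by
        rw [hc]
        field_simp
        rw [hzz]
      have h2 : (starRingEnd ℂ) c * M b a = - (r : ℂ) := by
        rw [hcc, hMba]
        field_simp
        rw [hzz]
      have h3 : (starRingEnd ℂ) c * M b b * c = M b b := by
        rw [hcc, hc]
        field_simp
        rw [show M a b * M b b * (starRingEnd ℂ) (M a b)
          = (M a b * (starRingEnd ℂ) (M a b)) * M b b by ring, hzz]
      rw [h1, h2, h3]
      ring
    rw [hcalc] at hq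
    have hqre := (Complex.le_def.1 hq).1
    simp only [Complex.zero_re, Complex.sub_re, Complex.add_re, Complex.mul_re,
      Complex.ofReal_re, Complex.ofReal_im, Complex.re_ofNat, Complex.im_ofNat,
      mul_zero, zero_mul, sub_zero] at hqre
    have hpair : (M a a).re + (M b b).re ≤ 1 := by
      rw [← htr]
      have hsub : ({a, b} : Finset (Fin k)) ⊆ Finset.univ := Finset.subset_univ _
      have := Finset.sum_le_sum_of_subset_of_nonneg hsub
        (fun q _ _ => hdiag_re q)
      rw [Finset.sum_pair hab] at this
      exact this
    linarith
end

noncomputable section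
open ComplexOrder

lemma isClosed_nonneg_complex : IsClosed {z : ℂ | 0 ≤ z} := by
  have : {z : ℂ | 0 ≤ z} = Complex.re ⁻¹' (Set.Ici 0) ∩ Complex.im ⁻¹' {0} := by
    ext z
    simp only [Set.mem_setOf_eq, Set.mem_inter_iff, Set.mem_preimage, Set.mem_Ici,
      Set.mem_singleton_iff, Complex.le_def, Complex.zero_re, Complex.zero_im]
    tauto
  rw [this]
  exact (isClosed_Ici.preimage Complex.continuous_re).inter
    (isClosed_singleton.preimage Complex.continuous_im)

lemma isClosed_density {k : ℕ} : IsClosed {M : Matrix (Fin k) (Fin k) ℂ | IsDensity M} := by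
  have heq : {M : Matrix (Fin k) (Fin k) ℂ | IsDensity M}
      = ({M : Matrix (Fin k) (Fin k) ℂ | Mᴴ = M}
        ∩ ⋂ x : Fin k → ℂ, {M : Matrix (Fin k) (Fin k) ℂ | 0 ≤ star x ⬝ᵥ M.mulVec x})
        ∩ {M : Matrix (Fin k) (Fin k) ℂ | M.trace = 1} := by
    ext M
    simp only [Set.mem_setOf_eq, Set.mem_inter_iff, Set.mem_iInter]
    exact ⟨fun h => ⟨⟨h.1.1, fun x => h.1.dotProduct_mulVec_nonneg x⟩, h.2⟩,
      fun h => ⟨Matrix.PosSemidef.of_dotProduct_mulVec_nonneg h.1.1 (fun x => h.1.2 x), h.2⟩⟩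
  rw [heq]
  refine IsClosed.inter (IsClosed.inter ?_ ?_) ?_
  · exact isClosed_eq continuous_id.matrix_conjTranspose continuous_id
  · refine isClosed_iInter fun x => ?_
    exact isClosed_nonneg_complex.preimage
      ((continuous_const : Continuous fun _ => star x).dotProduct
        (continuous_id.matrix_mulVec continuous_const))
  · exact isClosed_eq (continuous_id.matrix_trace) continuous_const

lemma isCompact_density {k : ℕ} :
    IsCompact {M : Matrix (Fin k) (Fin k) ℂ | IsDensity M} := by
  have hsub : {M : Matrix (Fin k) (Fin k) ℂ | IsDensity M}
      ⊆ Set.pi Set.univ (fun _ : Fin k => Set.pi Set.univ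
          (fun _ : Fin k => Metric.closedBall (0:ℂ) 1)) := by
    intro M hM
    intro a _ 
    intro b _
    rw [Metric.mem_closedBall, dist_zero_right]
    exact density_entry_bound hM a b
  have hcomp : IsCompact (Set.pi Set.univ (fun _ : Fin k => Set.pi Set.univ
      (fun _ : Fin k => Metric.closedBall (0:ℂ) 1))) := by
    refine isCompact_univ_pi fun a => isCompact_univ_pi fun b => ?_
    exact isCompact_closedBall 0 1
  exact hcomp.of_isClosed_subset isClosed_density hsub

end

noncomputable section
open ComplexOrder

variable {N : ℕ} (G : SimpleGraph (Fin N)) [DecidableRel G.Adj] (n : Fin N → ℕ)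
  (R : ∀ i j : Fin N, Matrix (Fin (n i) × Fin (n j)) (Fin (n i) × Fin (n j)) ℂ)

/-- the payoff functional `X ↦ Fb X Y` as a real linear map -/
def FbL (Y : ∀ i, Matrix (Fin (n i)) (Fin (n i)) ℂ) :
    (∀ i, Matrix (Fin (n i)) (Fin (n i)) ℂ) →ₗ[ℝ] ℝ where
  toFun := fun X => Fb G n R X Y
  map_add' := fun X X' => Fb_add_left G n R X X' Y
  map_smul' := fun r X => by
    have h1 : (r • X : ∀ i, Matrix (Fin (n i)) (Fin (n i)) ℂ)
        = fun j => ((r : ℂ)) • X j := funext fun j => real_smul_matrix r (X j)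
    show Fb G n R (r • X) Y = (RingHom.id ℝ) r • Fb G n R X Y
    rw [h1, Fb_smul_left]
    simp

lemma uniform_density {k : ℕ} (hk : 0 < k) :
    IsDensity ((((k : ℝ)⁻¹ : ℝ) : ℂ) • (1 : Matrix (Fin k) (Fin k) ℂ)) := by
  constructor
  · exact psd_smul_real Matrix.PosSemidef.one (by positivity)
  · rw [Matrix.trace_smul, Matrix.trace_one, smul_eq_mul]
    rw [Fintype.card_fin]
    rw [show (((k : ℝ)⁻¹ : ℝ) : ℂ) = ((k : ℂ))⁻¹ by push_cast; ring]
    field_simp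

lemma convex_density_profiles :
    Convex ℝ {X : ∀ i, Matrix (Fin (n i)) (Fin (n i)) ℂ | ∀ i, IsDensity (X i)} := by
  intro X hX Y hY a b ha hb hab
  intro i
  have hXi : (a • X + b • Y) i = ((a : ℂ)) • X i + ((b : ℂ)) • Y i := by
    rw [Pi.add_apply, Pi.smul_apply, Pi.smul_apply, real_smul_matrix, real_smul_matrix]
  rw [Set.mem_setOf_eq] at *
  rw [hXi]
  constructor
  · exact (psd_smul_real (hX i).1 ha).add (psd_smul_real (hY i).1 hb)
  · rw [Matrix.trace_add, Matrix.trace_smul, Matrix.trace_smul, (hX i).2, (hY i).2,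
      smul_eq_mul, smul_eq_mul, mul_one, mul_one]
    rw [show ((a:ℂ)) + ((b:ℂ)) = ((a + b : ℝ) : ℂ) by push_cast; ring, hab]
    simp

lemma nash_exists (hn : ∀ i, 0 < n i)
    (hR : ∀ i j, G.Adj i j → (R i j).IsHermitian)
    (hzs : ∀ X : ∀ i, Matrix (Fin (n i)) (Fin (n i)) ℂ,
      (∀ i, IsDensity (X i)) → ∑ i, payoff G n R X i = 0) :
    ∃ X : ∀ i, Matrix (Fin (n i)) (Fin (n i)) ℂ, (∀ i, IsDensity (X i)) ∧
      ∀ Y : ∀ i, Matrix (Fin (n i)) (Fin (n i)) ℂ,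
        (∀ i, IsDensity (Y i)) → Fb G n R X Y ≤ 0 := by
  by_contra hcon
  push_neg at hcon
  set C : Set (∀ i, Matrix (Fin (n i)) (Fin (n i)) ℂ) :=
    {X | ∀ i, IsDensity (X i)} with hCdef
  have hX0 : (fun i => ((((n i : ℝ))⁻¹ : ℝ) : ℂ) • (1 : Matrix (Fin (n i)) (Fin (n i)) ℂ)) ∈ C :=
    fun i => uniform_density (hn i)
  have hCcomp : IsCompact C := by
    have : C = Set.pi Set.univ (fun i => {M : Matrix (Fin (n i)) (Fin (n i)) ℂ | IsDensity M}) := by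
      ext X
      simp [Set.mem_pi, hCdef]
    rw [this]
    exact isCompact_univ_pi fun i => isCompact_density
  -- open cover by profitable deviations
  set σ := {Y : ∀ i, Matrix (Fin (n i)) (Fin (n i)) ℂ // ∀ i, IsDensity (Y i)} with hσdef
  set U : σ → Set (∀ i, Matrix (Fin (n i)) (Fin (n i)) ℂ) :=
    fun Y => (fun X => Fb G n R X Y.1) ⁻¹' Set.Ioi 0 with hUdef
  have hUopen : ∀ Y, IsOpen (U Y) := fun Y =>
    isOpen_Ioi.preimage (FbL G n R Y.1).continuous_of_finiteDimensional
  have hcover : C ⊆ ⋃ Y : σ, U Y := by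
    intro X hX
    obtain ⟨Y, hYd, hYpos⟩ := hcon X hX
    exact Set.mem_iUnion.2 ⟨⟨Y, hYd⟩, hYpos⟩
  obtain ⟨t, ht⟩ := hCcomp.elim_finite_subcover U hUopen hcover
  set m := t.card with hm
  have hmpos : 0 < m := by
    obtain ⟨V, hVt, -⟩ := Set.mem_iUnion₂.1 (ht hX0)
    exact Finset.card_pos.2 ⟨V, hVt⟩
  set e := t.equivFin with he
  set y : Fin m → (∀ i, Matrix (Fin (n i)) (Fin (n i)) ℂ) :=
    fun k0 => ((e.symm k0 : {x // x ∈ t}) : σ).1 with hy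
  have hyd : ∀ k0, ∀ i, IsDensity (y k0 i) := fun k0 => ((e.symm k0 : {x // x ∈ t}) : σ).2
  set A : Matrix (Fin m) (Fin m) ℝ := Matrix.of (fun j k0 => Fb G n R (y k0) (y j)) with hA
  have hAskew : ∀ j k0, A j k0 = - A k0 j := by
    intro j k0
    simp only [hA, Matrix.of_apply]
    exact Fb_skew G n R hR hzs (hyd k0) (hyd j)
  obtain ⟨lam, hlam, hle⟩ := skew_lemma hmpos A hAskew
  set xhat : ∀ i, Matrix (Fin (n i)) (Fin (n i)) ℂ := ∑ k0, lam k0 • y k0 with hxhat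
  have hxC : xhat ∈ C := by
    refine (convex_density_profiles n).sum_mem (fun k0 _ => hlam.1 k0) hlam.2
      (fun k0 _ => ?_)
    exact hyd k0
  have hxval : ∀ j, Fb G n R xhat (y j) = ∑ k0, lam k0 * Fb G n R (y k0) (y j) := by
    intro j
    have := map_sum (FbL G n R (y j)) (fun k0 => lam k0 • y k0) Finset.univ
    have h2 : ∀ k0, (FbL G n R (y j)) (lam k0 • y k0) = lam k0 * Fb G n R (y k0) (y j) :=
      fun k0 => (FbL G n R (y j)).map_smul (lam k0) (y k0) ▸ rfl
    calc Fb G n R xhat (y j) = (FbL G n R (y j)) xhat := rfl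
      _ = ∑ k0, (FbL G n R (y j)) (lam k0 • y k0) := this
      _ = ∑ k0, lam k0 * Fb G n R (y k0) (y j) := by
          refine Finset.sum_congr rfl fun k0 _ => ?_
          rw [_root_.map_smul]
          rfl
  obtain ⟨Y, hYt, hYpos⟩ := Set.mem_iUnion₂.1 (ht hxC)
  have hidx : y (e ⟨Y, hYt⟩) = Y.1 := by
    simp [hy, Equiv.symm_apply_apply]
  have hpos : 0 < Fb G n R xhat (y (e ⟨Y, hYt⟩)) := by
    rw [hidx]
    exact hYpos
  have hneg := hle (e ⟨Y, hYt⟩)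
  rw [hxval] at hpos
  have : ∑ k0, A (e ⟨Y, hYt⟩) k0 * lam k0 = ∑ k0, lam k0 * Fb G n R (y k0) (y (e ⟨Y, hYt⟩)) := by
    refine Finset.sum_congr rfl fun k0 _ => ?_
    simp only [hA, Matrix.of_apply]
    ring
  rw [this] at hneg
  linarith

end

/-- in a zero-sum semidefinite network game, a profile of density matrices `X`
is a Nash equilibrium iff there is `w ∈ ℝ^N` with `Φ_i(X) ⪯ w_i I` for all `i` and
`Σ_i w_i = 0`; consequently the set of Nash equilibria is the projection onto the
`X`-coordinates of the set of optimal solutions of the SDP minimizing `Σ_i w_i` subject to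
`Φ_i(X) ⪯ w_i I` with `X` a profile of density matrices. -/
theorem stmt12 {N : ℕ} (G : SimpleGraph (Fin N)) [DecidableRel G.Adj] (n : Fin N → ℕ)
    (hn : ∀ i, 0 < n i)
    (R : ∀ i j : Fin N, Matrix (Fin (n i) × Fin (n j)) (Fin (n i) × Fin (n j)) ℂ)
    (hR : ∀ i j, G.Adj i j → (R i j).IsHermitian)
    (hzs : ∀ X : ∀ i, Matrix (Fin (n i)) (Fin (n i)) ℂ,
      (∀ i, IsDensity (X i)) → ∑ i, payoff G n R X i = 0) :
    (∀ X : ∀ i, Matrix (Fin (n i)) (Fin (n i)) ℂ, (∀ i, IsDensity (X i)) →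
      (IsNash G n R X ↔ ∃ w : Fin N → ℝ,
        (∀ i, ((w i : ℂ) • (1 : Matrix (Fin (n i)) (Fin (n i)) ℂ)
          - Phi G n R X i).PosSemidef) ∧ ∑ i, w i = 0)) ∧
    {X : ∀ i, Matrix (Fin (n i)) (Fin (n i)) ℂ | (∀ i, IsDensity (X i)) ∧ IsNash G n R X} =
      {X : ∀ i, Matrix (Fin (n i)) (Fin (n i)) ℂ | ∃ w : Fin N → ℝ,
        ((∀ i, IsDensity (X i)) ∧
          ∀ i, ((w i : ℂ) • (1 : Matrix (Fin (n i)) (Fin (n i)) ℂ)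
            - Phi G n R X i).PosSemidef) ∧
        (∀ (w' : Fin N → ℝ) (X' : ∀ i, Matrix (Fin (n i)) (Fin (n i)) ℂ),
          ((∀ i, IsDensity (X' i)) ∧
            ∀ i, ((w' i : ℂ) • (1 : Matrix (Fin (n i)) (Fin (n i)) ℂ)
              - Phi G n R X' i).PosSemidef) →
          ∑ i, w i ≤ ∑ i, w' i)} := by
  -- main auxiliary facts
  have key : ∀ X : ∀ i, Matrix (Fin (n i)) (Fin (n i)) ℂ, (∀ i, IsDensity (X i)) →
      (IsNash G n R X ↔ ∃ w : Fin N → ℝ,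
        (∀ i, ((w i : ℂ) • (1 : Matrix (Fin (n i)) (Fin (n i)) ℂ)
          - Phi G n R X i).PosSemidef) ∧ ∑ i, w i = 0) := by
    intro X hX
    constructor
    · intro hnash
      refine ⟨fun i => payoff G n R X i, fun i => ?_, hzs X hX⟩
      refine posSemidef_of_density_frob_le
        (phi_isHermitian G n R hR (fun j => (hX j).1.1) i) (fun S hS => ?_)
      rw [← payoff_update_eq G n R hR i hS.1.1]
      exact hnash i S hS
    · rintro ⟨w, hpsd, hsum⟩
      have hple : ∀ i, payoff G n R X i ≤ w i := by
        intro i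
        rw [payoff_eq G n R hR (fun j => (hX j).1.1) i]
        exact density_frob_le (hX i) (hpsd i)
      have hsum0 : ∑ i, (w i - payoff G n R X i) = 0 := by
        rw [Finset.sum_sub_distrib, hsum, hzs X hX]
        ring
      have heq : ∀ i, payoff G n R X i = w i := by
        intro i
        have := (Finset.sum_eq_zero_iff_of_nonneg
          (fun i _ => sub_nonneg.2 (hple i))).1 hsum0 i (Finset.mem_univ i)
        linarith
      intro i S hS
      rw [payoff_update_eq G n R hR i hS.1.1, heq i]
      exact density_frob_le hS (hpsd i)
  -- feasibility implies nonnegative objective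
  have hfeas_nonneg : ∀ (w' : Fin N → ℝ) (X' : ∀ i, Matrix (Fin (n i)) (Fin (n i)) ℂ),
      (∀ i, IsDensity (X' i)) →
      (∀ i, ((w' i : ℂ) • (1 : Matrix (Fin (n i)) (Fin (n i)) ℂ)
        - Phi G n R X' i).PosSemidef) → 0 ≤ ∑ i, w' i := by
    intro w' X' hX' hpsd'
    have hple : ∀ i, payoff G n R X' i ≤ w' i := by
      intro i
      rw [payoff_eq G n R hR (fun j => (hX' j).1.1) i]
      exact density_frob_le (hX' i) (hpsd' i)
    have := Finset.sum_le_sum (fun i (_ : i ∈ Finset.univ) => hple i)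
    rw [hzs X' hX'] at this
    exact this
  refine ⟨key, ?_⟩
  -- existence of a Nash equilibrium, hence of a feasible point with zero value
  obtain ⟨X₀, hX₀d, hX₀F⟩ := nash_exists G n R hn hR hzs
  have hX₀nash : IsNash G n R X₀ :=
    (nash_iff_Fb G n R hR hzs hX₀d).2 (fun Y hY => hX₀F Y hY)
  obtain ⟨w₀, hw₀psd, hw₀sum⟩ := (key X₀ hX₀d).1 hX₀nash
  ext X
  simp only [Set.mem_setOf_eq]
  constructor
  · rintro ⟨hXd, hnash⟩
    obtain ⟨w, hpsd, hsum⟩ := (key X hXd).1 hnash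
    refine ⟨w, ⟨hXd, hpsd⟩, ?_⟩
    rintro w' X' ⟨hX'd, hpsd'⟩
    rw [hsum]
    exact hfeas_nonneg w' X' hX'd hpsd'
  · rintro ⟨w, ⟨hXd, hpsd⟩, hopt⟩
    have hle0 : ∑ i, w i ≤ 0 := by
      have := hopt w₀ X₀ ⟨hX₀d, hw₀psd⟩
      rw [hw₀sum] at this
      exact this
    have hge0 : 0 ≤ ∑ i, w i := hfeas_nonneg w X hXd hpsd
    have hsum0 : ∑ i, w i = 0 := le_antisymm hle0 hge0
    exact ⟨hXd, (key X hXd).2 ⟨w, hpsd, hsum0⟩⟩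

end
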